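/- (Main Theorem, DN-case, lower estimate.) Define B^{DN} = sup_{−M ≤ n ≤ N} (Σ_{i=−M}^{n} v̂_i)^(1/p*) · (Σ_{j=n}^{N} u_j)^(1/q). If A ≥ 0 is a constant such that (Σ_{n=−M}^{N} u_n |x_n|^q)^(1/q) ≤ A · (Σ_{n=−M}^{N} v_n |x_n − x_{n−1}|^p)^(1/p) holds for every real sequence (x_n)_{n=−M−1}^{N} with x_{−M−1} = 0, then A ≥ B^{DN}. -/

import Mathlib

/-- Main Theorem, DN-case, lower estimate. -/
theorem dn_lower (p q : ℝ) (hp : 1 < p) (hpq : p ≤ q)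
    (M N : ℤ) (hMN : -M ≤ N)
    (u v : ℤ → ℝ)
    (hu : ∀ n ∈ Finset.Icc (-M) N, 0 < u n)
    (hv : ∀ n ∈ Finset.Icc (-M) N, 0 < v n)
    (B : ℝ)
    (hB : B = ⨆ n ∈ Finset.Icc (-M) N,
      (∑ i ∈ Finset.Icc (-M) n, v i ^ (1 - p/(p-1))) ^ (1 - 1/p) *
        (∑ j ∈ Finset.Icc n N, u j) ^ (1/q))
    (A : ℝ) (hA : 0 ≤ A)
    (hineq : ∀ x : ℤ → ℝ, x (-M-1) = 0 →
      (∑ n ∈ Finset.Icc (-M) N, u n * |x n| ^ q) ^ (1/q) ≤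
        A * (∑ n ∈ Finset.Icc (-M) N, v n * |x n - x (n-1)| ^ p) ^ (1/p)) :
    B ≤ A := by
  subst hB
  refine Real.iSup_le (fun n => Real.iSup_le (fun hn => ?_) hA) hA
  rw [Finset.mem_Icc] at hn
  obtain ⟨hn1, hn2⟩ := hn
  have hp0 : (0:ℝ) < p := lt_trans one_pos hp
  have hp1 : (0:ℝ) < p - 1 := by linarith
  have hq1 : 1 < q := lt_of_lt_of_le hp hpq
  have hq0 : (0:ℝ) < q := lt_trans one_pos hq1
  set e : ℝ := 1 - p/(p-1) with he
  set V : ℝ := ∑ i ∈ Finset.Icc (-M) n, v i ^ e with hVdef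
  set U : ℝ := ∑ j ∈ Finset.Icc n N, u j with hUdef
  have hsub1 : Finset.Icc (-M) n ⊆ Finset.Icc (-M) N :=
    Finset.Icc_subset_Icc le_rfl hn2
  have hsub2 : Finset.Icc n N ⊆ Finset.Icc (-M) N :=
    Finset.Icc_subset_Icc hn1 le_rfl
  have hV : 0 < V :=
    Finset.sum_pos (fun i hi => Real.rpow_pos_of_pos (hv i (hsub1 hi)) _)
      ⟨n, Finset.mem_Icc.mpr ⟨hn1, le_rfl⟩⟩
  have hU : 0 < U :=
    Finset.sum_pos (fun j hj => hu j (hsub2 hj)) ⟨n, Finset.mem_Icc.mpr ⟨le_rfl, hn2⟩⟩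
  set x : ℤ → ℝ := fun k => ∑ i ∈ Finset.Icc (-M) (min k n), v i ^ e with hxdef
  have hx0 : x (-M-1) = 0 := by
    simp only [hxdef]
    rw [min_eq_left (by omega), Finset.Icc_eq_empty (by omega)]
    simp
  have key := hineq x hx0
  -- value of x on [n, N]
  have hxV : ∀ k, n ≤ k → x k = V := by
    intro k hk
    simp only [hxdef, hVdef, min_eq_right hk]
  -- difference values
  have hdiff : ∀ k, -M ≤ k → k ≤ n → x k - x (k-1) = v k ^ e := by
    intro k hk1 hk2
    simp only [hxdef]
    rw [min_eq_left hk2, min_eq_left (by omega)]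
    have hins : Finset.Icc (-M) k = insert k (Finset.Icc (-M) (k-1)) := by
      ext j
      simp only [Finset.mem_Icc, Finset.mem_insert]
      omega
    rw [hins, Finset.sum_insert (by simp only [Finset.mem_Icc]; omega)]
    ring
  have hdiff0 : ∀ k, n < k → x k - x (k-1) = 0 := by
    intro k hk
    simp only [hxdef]
    rw [min_eq_right (by omega), min_eq_right (by omega)]
    ring
  -- the RHS sum equals V
  have hRHS : ∑ k ∈ Finset.Icc (-M) N, v k * |x k - x (k-1)| ^ p = V := by
    rw [← Finset.sum_subset hsub1 (fun k hk hk' => ?_)]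
    · refine Finset.sum_congr rfl (fun k hk => ?_)
      rw [Finset.mem_Icc] at hk
      have hvk := hv k (hsub1 (Finset.mem_Icc.mpr hk))
      rw [hdiff k hk.1 hk.2, abs_of_pos (Real.rpow_pos_of_pos hvk _),
        ← Real.rpow_mul hvk.le]
      nth_rewrite 1 [← Real.rpow_one (v k)]
      rw [← Real.rpow_add hvk]
      congr 1
      push_cast
      rw [he]
      field_simp
      ring
    · rw [Finset.mem_Icc] at hk hk'
      rw [hdiff0 k (by omega), abs_zero, Real.zero_rpow (ne_of_gt hp0), mul_zero]
  rw [hRHS] at key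
  -- lower bound for the LHS sum
  have hLHS : V ^ q * U ≤ ∑ k ∈ Finset.Icc (-M) N, u k * |x k| ^ q := by
    have h1 : V ^ q * U = ∑ k ∈ Finset.Icc n N, u k * |x k| ^ q := by
      rw [hUdef, Finset.mul_sum]
      refine Finset.sum_congr rfl (fun k hk => ?_)
      rw [Finset.mem_Icc] at hk
      rw [hxV k hk.1, abs_of_pos hV]
      ring
    rw [h1]
    refine Finset.sum_le_sum_of_subset_of_nonneg hsub2 (fun k hk _ => ?_)
    exact mul_nonneg (hu k hk).le (Real.rpow_nonneg (abs_nonneg _) _)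
  -- combine
  have hchain : V * U ^ (1/q) ≤ A * V ^ (1/p) := by
    calc V * U ^ (1/q) = (V ^ q * U) ^ (1/q) := by
          rw [Real.mul_rpow (Real.rpow_nonneg hV.le _) hU.le,
            ← Real.rpow_mul hV.le, mul_one_div_cancel (ne_of_gt hq0), Real.rpow_one]
      _ ≤ (∑ k ∈ Finset.Icc (-M) N, u k * |x k| ^ q) ^ (1/q) := by
          exact Real.rpow_le_rpow (mul_nonneg (Real.rpow_nonneg hV.le _) hU.le) hLHS
            (by positivity)
      _ ≤ A * V ^ (1/p) := key
  have hVp : 0 < V ^ (1/p) := Real.rpow_pos_of_pos hV _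
  have hsplit : V = V ^ (1/p) * V ^ (1 - 1/p) := by
    rw [← Real.rpow_add hV]
    norm_num
  nth_rewrite 1 [hsplit] at hchain
  rw [show V ^ (1/p) * V ^ (1 - 1/p) * U ^ (1/q)
      = V ^ (1 - 1/p) * U ^ (1/q) * V ^ (1/p) from by ring] at hchain
  exact (mul_le_mul_iff_of_pos_right hVp).mp hchain
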